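/- With the definitions below, suppose π_{1,m} > 0 and that for each τ ∈ {a, b} there exists j with μ_j ≠ τ, so u_m = min_{τ ∈ {a,b}} min_{j : μ_j ≠ τ} |μ_j − τ| is well-defined and positive. Then for every t > 0 with t·(b−a) ≥ 2 and t·u_m ≥ 2, | π_{1,m}^{−1}·φ_m(t, μ) − 1 | ≤ ( 4σ(‖ω‖_TV + ‖ω‖_∞) + 12 ) / ( π_{1,m}·u_m·t ) + 4 / ( (b−a)·t·π_{1,m} ). -/

import Mathlib

open MeasureTheory Real Set Filter

lemma hasDerivAt_exp_neg_mul (x s : ℝ) (hx : x ≠ 0) :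
    HasDerivAt (fun s : ℝ => -Real.exp (-(s * x)) / x) (Real.exp (-(s * x))) s := by
  have h1 : HasDerivAt (fun s : ℝ => -(s * x)) (-x) s := by
    simpa using ((hasDerivAt_id s).mul_const x).fun_neg
  have h3 := ((Real.hasDerivAt_exp (-(s * x))).comp s h1).neg.div_const x
  refine h3.congr_deriv ?_
  field_simp

lemma integral_exp_neg_mul_Ioi {x : ℝ} (hx : 0 < x) :
    ∫ s in Ioi (0:ℝ), Real.exp (-(s * x)) = 1 / x := by
  have hint : IntegrableOn (fun s : ℝ => Real.exp (-(s * x))) (Ioi (0:ℝ)) := by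
    have := exp_neg_integrableOn_Ioi 0 hx
    simpa [mul_comm] using this
  have htend : Tendsto (fun s : ℝ => -Real.exp (-(s * x)) / x) atTop (nhds 0) := by
    have h1 : Tendsto (fun s : ℝ => -(s * x)) atTop atBot := by
      apply Filter.tendsto_neg_atBot_iff.2
      exact Tendsto.atTop_mul_const hx tendsto_id
    have h2 := (Real.tendsto_exp_atBot.comp h1).neg.div_const x
    simpa using h2
  have := integral_Ioi_of_hasDerivAt_of_tendsto'
    (fun s _ => hasDerivAt_exp_neg_mul x s hx.ne') hint htend
  rw [this]
  field_simp
  simp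

lemma integral_exp_neg_mul_sin (s T : ℝ) :
    ∫ x in (0:ℝ)..T, Real.exp (-(s*x)) * Real.sin x
      = (1 - Real.exp (-(s*T)) * (Real.cos T + s * Real.sin T)) / (1 + s^2) := by
  have hs2 : (1:ℝ) + s^2 ≠ 0 := by positivity
  have D : ∀ x : ℝ, HasDerivAt
      (fun x : ℝ => -(Real.exp (-(s*x)) * (Real.cos x + s * Real.sin x)) / (1 + s^2))
      (Real.exp (-(s*x)) * Real.sin x) x := by
    intro x
    have h1 : HasDerivAt (fun x : ℝ => -(s*x)) (-s) x := by
      simpa using ((hasDerivAt_id x).const_mul s).fun_neg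
    have h2 := (Real.hasDerivAt_exp (-(s*x))).comp x h1
    have h3 : HasDerivAt (fun x : ℝ => Real.cos x + s * Real.sin x)
        (-Real.sin x + s * Real.cos x) x :=
      (Real.hasDerivAt_cos x).add ((Real.hasDerivAt_sin x).const_mul s)
    have h4 := ((h2.mul h3).neg).div_const (1 + s^2)
    refine h4.congr_deriv ?_
    simp only [Function.comp_apply]
    field_simp
    ring
  rw [intervalIntegral.integral_eq_sub_of_hasDerivAt (fun x _ => D x)
    (by apply Continuous.intervalIntegrable; fun_prop)]
  simp only [mul_zero, neg_zero, Real.exp_zero, Real.cos_zero, Real.sin_zero]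
  ring

lemma abs_Si_sub_pi_div_two {T : ℝ} (hT : 0 < T) :
    |(∫ y in (0:ℝ)..T, Real.sin y / y) - π/2| ≤ 1/T := by
  set μ := volume.restrict (Ioc (0:ℝ) T) with hμ
  set ν := volume.restrict (Ioi (0:ℝ)) with hν
  set f : ℝ × ℝ → ℝ := fun p => Real.exp (-(p.2 * p.1)) * Real.sin p.1 with hf
  have hfc : Continuous f := by fun_prop
  -- integrability on the product
  have hfint : Integrable f (μ.prod ν) := by
    rw [integrable_prod_iff (hfc.aestronglyMeasurable)]
    constructor
    · filter_upwards [ae_restrict_mem measurableSet_Ioc] with x hx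
      have hx0 : 0 < x := hx.1
      have : IntegrableOn (fun s : ℝ => Real.exp (-(s * x))) (Ioi (0:ℝ)) := by
        simpa [mul_comm] using exp_neg_integrableOn_Ioi 0 hx0
      exact (this.mul_const (Real.sin x))
    · apply Integrable.mono' (integrable_const (1:ℝ))
      · exact (hfc.aestronglyMeasurable (μ := μ.prod ν)).norm.integral_prod_right'
      · filter_upwards [ae_restrict_mem measurableSet_Ioc] with x hx
        have hx0 : 0 < x := hx.1
        have hcomp : ∫ s, ‖f (x, s)‖ ∂ν = |Real.sin x| * (1/x) := by
          rw [← integral_exp_neg_mul_Ioi hx0, ← integral_const_mul]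
          apply setIntegral_congr_fun measurableSet_Ioi
          intro s _
          simp [hf, abs_mul, abs_of_pos (Real.exp_pos _), mul_comm]
        rw [Real.norm_eq_abs, hcomp, abs_of_nonneg (by positivity)]
        rw [mul_one_div, div_le_one hx0]
        calc |Real.sin x| ≤ |x| := Real.abs_sin_le_abs
          _ = x := abs_of_pos hx0
  -- Fubini
  have hswap := integral_integral_swap (f := fun x s => f (x, s)) hfint
  -- LHS is the sinc integral
  have hL : (∫ x, (∫ s, f (x, s) ∂ν) ∂μ) = ∫ y in (0:ℝ)..T, Real.sin y / y := by
    rw [intervalIntegral.integral_of_le hT.le]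
    apply setIntegral_congr_fun measurableSet_Ioc
    intro x hx
    have hx0 : 0 < x := hx.1
    dsimp only
    have : (∫ s, f (x, s) ∂ν) = (∫ s in Ioi (0:ℝ), Real.exp (-(s * x))) * Real.sin x := by
      rw [← integral_mul_const]
    rw [this, integral_exp_neg_mul_Ioi hx0]
    ring
  -- RHS inner integral
  have hR : ∀ s : ℝ, (∫ x, f (x, s) ∂μ)
      = (1 - Real.exp (-(s*T)) * (Real.cos T + s * Real.sin T)) / (1 + s^2) := by
    intro s
    rw [hμ, ← intervalIntegral.integral_of_le hT.le]
    exact integral_exp_neg_mul_sin s T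
  -- the error term
  have hRint : Integrable (fun s => ∫ x, f (x, s) ∂μ) ν := hfint.integral_prod_right
  have hEint : Integrable (fun s : ℝ => (1 + s^2)⁻¹ - ∫ x, f (x, s) ∂μ) ν :=
    (integrable_inv_one_add_sq.restrict).sub hRint
  have key : (∫ y in (0:ℝ)..T, Real.sin y / y)
      = π/2 - ∫ s, ((1 + s^2)⁻¹ - ∫ x, f (x, s) ∂μ) ∂ν := by
    rw [integral_sub integrable_inv_one_add_sq.restrict hRint]
    have : ∫ s, (1 + s^2)⁻¹ ∂ν = π/2 := by
      rw [hν, integral_Ioi_inv_one_add_sq, Real.arctan_zero, sub_zero]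
    rw [this, ← hL, hswap]
    ring
  rw [key]
  have hbound : ∀ s : ℝ, |(1 + s^2)⁻¹ - ∫ x, f (x, s) ∂μ| ≤ Real.exp (-(s * T)) := by
    intro s
    rw [hR s]
    have hs2 : (0:ℝ) < 1 + s^2 := by positivity
    have heq2 : (1 + s^2)⁻¹ - (1 - Real.exp (-(s*T)) * (Real.cos T + s * Real.sin T)) / (1 + s^2)
        = Real.exp (-(s*T)) * (Real.cos T + s * Real.sin T) / (1 + s^2) := by
      rw [inv_eq_one_div, div_sub_div_same]; congr 1; ring
    rw [heq2, abs_div, abs_of_pos hs2, div_le_iff₀ hs2, abs_mul,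
      abs_of_pos (Real.exp_pos _)]
    have hcs : (Real.cos T + s * Real.sin T)^2 ≤ 1 + s^2 := by
      have h1 : Real.sin T ^2 + Real.cos T ^2 = 1 := Real.sin_sq_add_cos_sq T
      nlinarith [sq_nonneg (s * Real.cos T - Real.sin T)]
    have habs : |Real.cos T + s * Real.sin T| ≤ 1 + s^2 := by
      nlinarith [hcs, sq_abs (Real.cos T + s * Real.sin T),
        abs_nonneg (Real.cos T + s * Real.sin T), sq_nonneg s]
    calc Real.exp (-(s*T)) * |Real.cos T + s * Real.sin T|
        ≤ Real.exp (-(s*T)) * (1 + s^2) := by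
          exact mul_le_mul_of_nonneg_left habs (Real.exp_pos _).le
      _ = Real.exp (-(s*T)) * (1 + s^2) := rfl
  have : |∫ s, ((1 + s^2)⁻¹ - ∫ x, f (x, s) ∂μ) ∂ν| ≤ ∫ s, Real.exp (-(s * T)) ∂ν := by
    rw [← Real.norm_eq_abs]
    apply norm_integral_le_of_norm_le
    · exact (by simpa [mul_comm] using (exp_neg_integrableOn_Ioi 0 hT) :
        IntegrableOn (fun s : ℝ => Real.exp (-(s * T))) (Ioi 0))
    · filter_upwards with s
      exact hbound s
  have hexp : ∫ s, Real.exp (-(s * T)) ∂ν = 1/T := integral_exp_neg_mul_Ioi hT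
  rw [show π / 2 - (∫ s, ((1 + s ^ 2)⁻¹ - ∫ x, f (x, s) ∂μ) ∂ν) - π / 2
      = -(∫ s, ((1 + s ^ 2)⁻¹ - ∫ x, f (x, s) ∂μ) ∂ν) from by ring, abs_neg, ← hexp]
  exact this

lemma sinc_intervalIntegrable (u v : ℝ) :
    IntervalIntegrable (fun y => Real.sin y / y) volume u v := by
  rw [intervalIntegrable_iff]
  haveI : IsFiniteMeasure (volume.restrict (Set.uIoc u v)) := by
    constructor
    rw [Measure.restrict_apply_univ]
    exact measure_Ioc_lt_top
  apply Integrable.mono' (integrable_const (1:ℝ))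
  · exact (Real.measurable_sin.div measurable_id).aestronglyMeasurable
  · filter_upwards with y
    rw [Real.norm_eq_abs, abs_div]
    rcases eq_or_ne y 0 with rfl | hy
    · simp
    · rw [div_le_one (abs_pos.2 hy)]
      exact Real.abs_sin_le_abs

lemma Si_neg (X : ℝ) : (∫ y in (0:ℝ)..(-X), Real.sin y / y)
    = -(∫ y in (0:ℝ)..X, Real.sin y / y) := by
  have h := intervalIntegral.integral_comp_neg (a := (0:ℝ)) (b := X)
    (fun y => Real.sin y / y)
  have h2 : (∫ y in (0:ℝ)..X, Real.sin (-y) / (-y)) = ∫ y in (0:ℝ)..X, Real.sin y / y := by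
    apply intervalIntegral.integral_congr
    intro y _
    simp only [Real.sin_neg, neg_div_neg_eq]
  rw [h2, neg_zero] at h
  have e1 : (∫ y in (-X)..(0:ℝ), Real.sin y / y) = -∫ y in (0:ℝ)..(-X), Real.sin y / y :=
    intervalIntegral.integral_symm 0 (-X)
  linarith

lemma Si_tail_neg {T : ℝ} (hT : T < 0) :
    |(∫ y in (0:ℝ)..T, Real.sin y / y) + π/2| ≤ 1/(-T) := by
  have h := abs_Si_sub_pi_div_two (T := -T) (by linarith)
  have hT2 : (∫ y in (0:ℝ)..T, Real.sin y / y)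
      = -(∫ y in (0:ℝ)..(-T), Real.sin y / y) := by
    rw [← Si_neg, neg_neg]
  rw [hT2, show -(∫ y in (0:ℝ)..(-T), Real.sin y / y) + π/2
    = -((∫ y in (0:ℝ)..(-T), Real.sin y / y) - π/2) by ring, abs_neg]
  exact h

-- interior case: u < 0 < v
lemma sinc_integral_interior {u v : ℝ} (hu : u < 0) (hv : 0 < v) :
    |(∫ y in u..v, Real.sin y / y) - π| ≤ 1/v + 1/(-u) := by
  have hsplit : (∫ y in u..v, Real.sin y / y)
      = (∫ y in (0:ℝ)..v, Real.sin y / y) - (∫ y in (0:ℝ)..u, Real.sin y / y) :=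
    (intervalIntegral.integral_interval_sub_left (sinc_intervalIntegrable 0 v)
      (sinc_intervalIntegrable 0 u)).symm
  have h1 := abs_Si_sub_pi_div_two hv
  have h2 := Si_tail_neg hu
  rw [hsplit]
  have : (∫ y in (0:ℝ)..v, Real.sin y / y) - (∫ y in (0:ℝ)..u, Real.sin y / y) - π
      = ((∫ y in (0:ℝ)..v, Real.sin y / y) - π/2)
        - ((∫ y in (0:ℝ)..u, Real.sin y / y) + π/2) := by ring
  rw [this]
  exact (abs_sub _ _).trans (by gcongr)

-- exterior case, both positive: 0 < u ≤ v
lemma sinc_integral_right {u v : ℝ} (hu : 0 < u) (hv : 0 < v) :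
    |∫ y in u..v, Real.sin y / y| ≤ 1/u + 1/v := by
  have hsplit : (∫ y in u..v, Real.sin y / y)
      = (∫ y in (0:ℝ)..v, Real.sin y / y) - (∫ y in (0:ℝ)..u, Real.sin y / y) :=
    (intervalIntegral.integral_interval_sub_left (sinc_intervalIntegrable 0 v)
      (sinc_intervalIntegrable 0 u)).symm
  have h1 := abs_Si_sub_pi_div_two hv
  have h2 := abs_Si_sub_pi_div_two hu
  rw [hsplit, show (∫ y in (0:ℝ)..v, Real.sin y / y) - (∫ y in (0:ℝ)..u, Real.sin y / y)
      = ((∫ y in (0:ℝ)..v, Real.sin y / y) - π/2)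
        - ((∫ y in (0:ℝ)..u, Real.sin y / y) - π/2) by ring]
  exact (abs_sub _ _).trans (by rw [add_comm]; gcongr)

-- exterior case, both negative: u ≤ v < 0
lemma sinc_integral_left {u v : ℝ} (hu : u < 0) (hv : v < 0) :
    |∫ y in u..v, Real.sin y / y| ≤ 1/(-u) + 1/(-v) := by
  have hsplit : (∫ y in u..v, Real.sin y / y)
      = (∫ y in (0:ℝ)..v, Real.sin y / y) - (∫ y in (0:ℝ)..u, Real.sin y / y) :=
    (intervalIntegral.integral_interval_sub_left (sinc_intervalIntegrable 0 v)
      (sinc_intervalIntegrable 0 u)).symm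
  have h1 := Si_tail_neg hv
  have h2 := Si_tail_neg hu
  rw [hsplit, show (∫ y in (0:ℝ)..v, Real.sin y / y) - (∫ y in (0:ℝ)..u, Real.sin y / y)
      = ((∫ y in (0:ℝ)..v, Real.sin y / y) + π/2)
        - ((∫ y in (0:ℝ)..u, Real.sin y / y) + π/2) by ring]
  exact (abs_sub _ _).trans (by rw [add_comm]; gcongr)

-- half case: from 0 or to 0
lemma sinc_integral_half_right {v : ℝ} (hv : 0 < v) :
    |(∫ y in (0:ℝ)..v, Real.sin y / y) - π/2| ≤ 1/v := abs_Si_sub_pi_div_two hv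

lemma sinc_integral_half_left {u : ℝ} (hu : u < 0) :
    |(∫ y in u..(0:ℝ), Real.sin y / y) - π/2| ≤ 1/(-u) := by
  have h2 := Si_tail_neg hu
  rw [intervalIntegral.integral_symm, show -(∫ y in (0:ℝ)..u, Real.sin y / y) - π/2
    = -((∫ y in (0:ℝ)..u, Real.sin y / y) + π/2) by ring, abs_neg]
  exact h2

lemma integral_cos_mul' {l : ℝ} (hl : l ≠ 0) (u v : ℝ) :
    ∫ s in u..v, Real.cos (l*s) = (Real.sin (l*v) - Real.sin (l*u))/l := by
  have D : ∀ s : ℝ, HasDerivAt (fun s : ℝ => Real.sin (l*s)/l) (Real.cos (l*s)) s := by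
    intro s
    have h1 : HasDerivAt (fun s : ℝ => l*s) l s := by
      simpa using (hasDerivAt_id s).const_mul l
    have h2 := ((Real.hasDerivAt_sin (l*s)).comp s h1).div_const l
    refine h2.congr_deriv ?_
    field_simp
  rw [intervalIntegral.integral_eq_sub_of_hasDerivAt (fun s _ => D s)
    (Continuous.intervalIntegrable (by fun_prop) _ _)]
  ring

lemma RL_mono (h : ℝ → ℝ) (hmono : Monotone h) {l : ℝ} (hl : 0 < l) :
    |∫ s in Ioc (-1:ℝ) 1, (h s - h (-1)) * Real.cos (l * s)| ≤ 2 * (h 1 - h (-1)) / l := by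
  set A := h (-1) with hA
  set B := h 1 with hB
  have hAB : A ≤ B := hmono (by norm_num)
  rcases eq_or_lt_of_le hAB with heq | hlt
  · -- constant case
    have hz : ∀ s ∈ Ioc (-1:ℝ) 1, (h s - A) * Real.cos (l * s) = 0 := by
      intro s hs
      have h1 : h s ≤ B := hmono hs.2
      have h2 : A ≤ h s := hmono hs.1.le
      have : h s = A := le_antisymm (heq ▸ h1) h2
      rw [this, sub_self, zero_mul]
    rw [setIntegral_congr_fun measurableSet_Ioc hz]
    simp [← heq]
  · set μ := volume.restrict (Ioc (-1:ℝ) 1) with hμ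
    set ν := volume.restrict (Ioc A B) with hν
    haveI : IsFiniteMeasure μ := by
      constructor; rw [hμ, Measure.restrict_apply_univ]; exact measure_Ioc_lt_top
    haveI : IsFiniteMeasure ν := by
      constructor; rw [hν, Measure.restrict_apply_univ]; exact measure_Ioc_lt_top
    set g : ℝ × ℝ → ℝ := fun p => (if p.2 ≤ h p.1 then (1:ℝ) else 0) * Real.cos (l * p.1)
      with hg
    have hmeas : Measurable g := by
      apply Measurable.mul
      · exact Measurable.ite
          (measurableSet_le measurable_snd (hmono.measurable.comp measurable_fst))
          measurable_const measurable_const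
      · exact (Real.continuous_cos.comp (continuous_const.mul continuous_fst)).measurable
    have hgint : Integrable g (μ.prod ν) := by
      apply Integrable.mono' (integrable_const (1:ℝ)) hmeas.aestronglyMeasurable
      filter_upwards with p
      rw [Real.norm_eq_abs, hg, abs_mul]
      have h1 : |if p.2 ≤ h p.1 then (1:ℝ) else 0| ≤ 1 := by
        split <;> simp
      calc |if p.2 ≤ h p.1 then (1:ℝ) else 0| * |Real.cos (l * p.1)|
          ≤ 1 * 1 := mul_le_mul h1 (Real.abs_cos_le_one _) (abs_nonneg _) zero_le_one
        _ = 1 := mul_one 1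
    -- step 1: fiber integral over y
    have hfiber : ∀ s ∈ Ioc (-1:ℝ) 1,
        (h s - A) * Real.cos (l * s) = ∫ y, g (s, y) ∂ν := by
      intro s hs
      have h1 : h s ≤ B := hmono hs.2
      have h2 : A ≤ h s := hmono hs.1.le
      have hind : (fun y => (if y ≤ h s then (1:ℝ) else 0))
          = (Iic (h s)).indicator (fun _ => (1:ℝ)) := by
        ext y; simp [Set.indicator_apply]
      have : (∫ y, (if y ≤ h s then (1:ℝ) else 0) ∂ν) = h s - A := by
        rw [hind, hν, setIntegral_indicator measurableSet_Iic]
        rw [Set.Ioc_inter_Iic, min_eq_right h1, setIntegral_const, smul_eq_mul, mul_one,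
          Real.volume_real_Ioc_of_le h2]
      calc (h s - A) * Real.cos (l * s)
          = (∫ y, (if y ≤ h s then (1:ℝ) else 0) ∂ν) * Real.cos (l * s) := by rw [this]
        _ = ∫ y, (if y ≤ h s then (1:ℝ) else 0) * Real.cos (l * s) ∂ν := by
            rw [integral_mul_const]
        _ = ∫ y, g (s, y) ∂ν := rfl
    have hI : (∫ s in Ioc (-1:ℝ) 1, (h s - A) * Real.cos (l * s))
        = ∫ y, (∫ s, g (s, y) ∂μ) ∂ν := by
      rw [setIntegral_congr_fun measurableSet_Ioc hfiber]
      exact integral_integral_swap hgint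
    rw [hI]
    -- step 2: bound the inner integral
    have hinner : ∀ y ∈ Ioc A B, |∫ s, g (s, y) ∂μ| ≤ 2 / l := by
      intro y hy
      set U : Set ℝ := {s | y ≤ h s} ∩ Icc (-1:ℝ) 1 with hU
      have h1U : (1:ℝ) ∈ U := ⟨by simpa [hB] using hy.2, by norm_num, le_refl 1⟩
      have hUne : U.Nonempty := ⟨1, h1U⟩
      have hUbdd : BddBelow U := ⟨-1, fun x hx => hx.2.1⟩
      set u := sInf U with hu
      have hu_mem_lb : -1 ≤ u := le_csInf hUne (fun x hx => hx.2.1)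
      have hu_le_one : u ≤ 1 := csInf_le hUbdd h1U
      have hae : (fun s => g (s, y)) =ᵐ[μ]
          (Ioc u 1).indicator (fun s => Real.cos (l * s)) := by
        have hne : ∀ᵐ s ∂μ, s ≠ u := by
          refine ae_iff.2 ?_
          have hset : {s : ℝ | ¬ s ≠ u} = {u} := by ext x; simp
          rw [hset, hμ, Measure.restrict_apply (measurableSet_singleton u)]
          exact measure_mono_null Set.inter_subset_left (Real.volume_singleton)
        filter_upwards [ae_restrict_mem measurableSet_Ioc, hne] with s hs hsu
        rcases lt_or_gt_of_ne hsu with hlt' | hgt'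
        · -- s < u : not in U, not in Ioc u 1
          have hnotU : ¬ y ≤ h s := by
            intro hyh
            exact absurd (csInf_le hUbdd ⟨hyh, hs.1.le, hs.2⟩) (not_le.2 hlt')
          have : s ∉ Ioc u 1 := fun hm => absurd hm.1 (not_lt.2 hlt'.le)
          simp [hg, hnotU, Set.indicator_of_notMem this]
        · -- u < s
          obtain ⟨w, hw, hws⟩ := exists_lt_of_csInf_lt hUne (by exact hgt' : u < s)
          have hyh : y ≤ h s := hw.1.trans (hmono hws.le)
          have : s ∈ Ioc u 1 := ⟨hgt', hs.2⟩
          simp [hg, hyh, Set.indicator_of_mem this]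
      rw [integral_congr_ae hae]
      have hSub : Ioc (-1:ℝ) 1 ∩ Ioc u 1 = Ioc u 1 :=
        Set.inter_eq_self_of_subset_right (Set.Ioc_subset_Ioc_left hu_mem_lb)
      rw [setIntegral_indicator measurableSet_Ioc, hSub,
        ← intervalIntegral.integral_of_le hu_le_one, integral_cos_mul' hl.ne']
      rw [abs_div, abs_of_pos hl]
      have hs2 : |Real.sin (l*1) - Real.sin (l*u)| ≤ 2 := by
        calc |Real.sin (l*1) - Real.sin (l*u)| ≤ |Real.sin (l*1)| + |Real.sin (l*u)| :=
              abs_sub _ _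
          _ ≤ 1 + 1 := add_le_add (Real.abs_sin_le_one _) (Real.abs_sin_le_one _)
          _ = 2 := by norm_num
      gcongr
    -- step 3: conclude
    have hinnerint : Integrable (fun y => ∫ s, g (s, y) ∂μ) ν := hgint.integral_prod_right
    have hb : |∫ y, (∫ s, g (s, y) ∂μ) ∂ν| ≤ ∫ _y, (2/l) ∂ν := by
      rw [← Real.norm_eq_abs]
      apply norm_integral_le_of_norm_le (integrable_const _)
      filter_upwards [ae_restrict_mem measurableSet_Ioc] with y hy
      exact hinner y hy
    have hconst : (∫ _y, (2/l) ∂ν) = (B - A) * (2/l) := by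
      rw [integral_const, smul_eq_mul, hν, measureReal_restrict_apply_univ,
        Real.volume_real_Ioc_of_le hAB]
    calc |∫ y, (∫ s, g (s, y) ∂μ) ∂ν| ≤ ∫ _y, (2/l) ∂ν := hb
      _ = (B - A) * (2/l) := hconst
      _ = 2 * (B - A) / l := by ring

lemma RL_monotoneOn (g : ℝ → ℝ) (hg : MonotoneOn g (Icc (-1:ℝ) 1)) {l : ℝ} (hl : 0 < l) :
    |∫ s in (-1:ℝ)..1, g s * Real.cos (l * s)|
      ≤ (2*|g (-1)| + 2*(g 1 - g (-1))) / l := by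
  set cl : ℝ → ℝ := fun s => max (-1) (min 1 s) with hcl
  have hclmem : ∀ s, cl s ∈ Icc (-1:ℝ) 1 :=
    fun s => ⟨le_max_left _ _, max_le (by norm_num) (min_le_left _ _)⟩
  have hclmono : Monotone cl :=
    fun s t hst => max_le_max le_rfl (min_le_min le_rfl hst)
  set h : ℝ → ℝ := g ∘ cl with hh
  have hhmono : Monotone h := fun s t hst => hg (hclmem s) (hclmem t) (hclmono hst)
  have hcl1 : cl 1 = 1 := by simp [hcl]
  have hclm1 : cl (-1) = -1 := by norm_num [hcl]
  have hcleq : ∀ s ∈ Icc (-1:ℝ) 1, cl s = s := fun s hs => by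
    rw [hcl]; dsimp only; rw [min_eq_right hs.2, max_eq_right hs.1]
  have hh1 : h 1 = g 1 := by rw [hh]; simp [hcl1]
  have hhm1 : h (-1) = g (-1) := by rw [hh]; simp [hclm1]
  have heqOn : ∀ s ∈ Icc (-1:ℝ) 1, h s = g s := fun s hs => by
    rw [hh]; simp [hcleq s hs]
  -- replace g by h in the integral
  have hintg : (∫ s in (-1:ℝ)..1, g s * Real.cos (l * s))
      = ∫ s in (-1:ℝ)..1, h s * Real.cos (l * s) := by
    apply intervalIntegral.integral_congr
    intro s hs
    rw [Set.uIcc_of_le (by norm_num : (-1:ℝ) ≤ 1)] at hs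
    dsimp only
    rw [heqOn s hs]
  have hint1 : IntervalIntegrable (fun s => (h s - h (-1)) * Real.cos (l * s))
      volume (-1) 1 := by
    apply IntervalIntegrable.mul_continuousOn
    · have : Monotone (fun s => h s - h (-1)) := fun s t hst => by
        simpa using sub_le_sub_right (hhmono hst) (h (-1))
      exact this.intervalIntegrable
    · fun_prop
  have hint2 : IntervalIntegrable (fun s => h (-1) * Real.cos (l * s)) volume (-1) 1 := by
    apply Continuous.intervalIntegrable; fun_prop
  have hsplit : (∫ s in (-1:ℝ)..1, h s * Real.cos (l * s))
      = (∫ s in (-1:ℝ)..1, (h s - h (-1)) * Real.cos (l * s))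
        + ∫ s in (-1:ℝ)..1, h (-1) * Real.cos (l * s) := by
    rw [← intervalIntegral.integral_add hint1 hint2]
    apply intervalIntegral.integral_congr
    intro s _
    ring
  have hterm1 : |∫ s in (-1:ℝ)..1, (h s - h (-1)) * Real.cos (l * s)|
      ≤ 2 * (g 1 - g (-1)) / l := by
    rw [intervalIntegral.integral_of_le (by norm_num : (-1:ℝ) ≤ 1)]
    rw [← hh1, ← hhm1]
    exact RL_mono h hhmono hl
  have hterm2 : |∫ s in (-1:ℝ)..1, h (-1) * Real.cos (l * s)| ≤ 2 * |g (-1)| / l := by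
    rw [intervalIntegral.integral_const_mul, integral_cos_mul' hl.ne', abs_mul, hhm1]
    rw [abs_div, abs_of_pos hl]
    have : |Real.sin (l*1) - Real.sin (l*(-1))| ≤ 2 := by
      calc |Real.sin (l*1) - Real.sin (l*(-1))|
          ≤ |Real.sin (l*1)| + |Real.sin (l*(-1))| := abs_sub _ _
        _ ≤ 1 + 1 := add_le_add (Real.abs_sin_le_one _) (Real.abs_sin_le_one _)
        _ = 2 := by norm_num
    calc |g (-1)| * (|Real.sin (l*1) - Real.sin (l*(-1))| / l)
        ≤ |g (-1)| * (2 / l) := by gcongr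
      _ = 2 * |g (-1)| / l := by ring
  rw [hintg, hsplit]
  calc |(∫ s in (-1:ℝ)..1, (h s - h (-1)) * Real.cos (l * s))
        + ∫ s in (-1:ℝ)..1, h (-1) * Real.cos (l * s)|
      ≤ |∫ s in (-1:ℝ)..1, (h s - h (-1)) * Real.cos (l * s)|
        + |∫ s in (-1:ℝ)..1, h (-1) * Real.cos (l * s)| := abs_add_le _ _
    _ ≤ 2 * (g 1 - g (-1)) / l + 2 * |g (-1)| / l := add_le_add hterm1 hterm2
    _ = (2*|g (-1)| + 2*(g 1 - g (-1))) / l := by ring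

lemma omega_cos_bound (ω : ℝ → ℝ) (hω_nonneg : ∀ s, 0 ≤ ω s)
    (hω_bdd : ∃ C : ℝ, ∀ s, ω s ≤ C)
    (hω_BV : BoundedVariationOn ω (Set.Icc (-1) 1))
    {c : ℝ} (hc : c ≠ 0) :
    |∫ s in (-1:ℝ)..1, ω s * Real.cos (c * s)|
      ≤ 4 * ((eVariationOn ω (Set.Icc (-1) 1)).toReal + ⨆ s : ℝ, |ω s|) / |c| := by
  set V : ℝ := (eVariationOn ω (Set.Icc (-1) 1)).toReal with hV
  set W : ℝ := ⨆ s : ℝ, |ω s| with hW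
  obtain ⟨C, hC⟩ := hω_bdd
  have hbdd : BddAbove (Set.range fun s : ℝ => |ω s|) := by
    refine ⟨C, ?_⟩
    rintro x ⟨s, rfl⟩
    dsimp only
    rw [abs_of_nonneg (hω_nonneg s)]
    exact hC s
  have hWle : ∀ s, ω s ≤ W := fun s => by
    rw [← abs_of_nonneg (hω_nonneg s)]
    exact le_ciSup hbdd s
  have hWnn : 0 ≤ W := (hω_nonneg 0).trans (hWle 0)
  have hVnn : 0 ≤ V := ENNReal.toReal_nonneg
  -- reduce to positive frequency
  have hcos : ∀ s, Real.cos (c * s) = Real.cos (|c| * s) := by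
    intro s
    rcases abs_cases c with ⟨h1, _⟩ | ⟨h1, _⟩
    · rw [h1]
    · rw [h1, neg_mul, Real.cos_neg]
  simp_rw [hcos]
  set l := |c| with hl
  have hlpos : 0 < l := abs_pos.2 hc
  -- monotone decomposition
  have hlbv : LocallyBoundedVariationOn ω (Icc (-1:ℝ) 1) :=
    hω_BV.locallyBoundedVariationOn
  have hm1mem : (-1:ℝ) ∈ Icc (-1:ℝ) 1 := by norm_num
  set p : ℝ → ℝ := variationOnFromTo ω (Icc (-1:ℝ) 1) (-1) with hp
  set q : ℝ → ℝ := fun x => p x - ω x with hq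
  have hpmono : MonotoneOn p (Icc (-1:ℝ) 1) := variationOnFromTo.monotoneOn hlbv hm1mem
  have hqmono : MonotoneOn q (Icc (-1:ℝ) 1) := by
    have := variationOnFromTo.sub_self_monotoneOn hlbv hm1mem
    exact this
  have hpm1 : p (-1) = 0 := variationOnFromTo.self ω _ (-1)
  have hp1 : p 1 = V := by
    rw [hp, variationOnFromTo.eq_of_le ω _ (by norm_num : (-1:ℝ) ≤ 1), Set.inter_self]
  have hq1 : q 1 = V - ω 1 := by rw [hq]; dsimp only; rw [hp1]
  have hqm1 : q (-1) = - ω (-1) := by rw [hq]; dsimp only; rw [hpm1]; ring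
  -- integrability
  have huIcc : Set.uIcc (-1:ℝ) 1 = Icc (-1:ℝ) 1 := Set.uIcc_of_le (by norm_num)
  have hpmono' : MonotoneOn p (Set.uIcc (-1:ℝ) 1) := by rw [huIcc]; exact hpmono
  have hqmono' : MonotoneOn q (Set.uIcc (-1:ℝ) 1) := by rw [huIcc]; exact hqmono
  have hpint : IntervalIntegrable (fun s => p s * Real.cos (l * s)) volume (-1) 1 :=
    IntervalIntegrable.mul_continuousOn hpmono'.intervalIntegrable (by fun_prop)
  have hqint : IntervalIntegrable (fun s => q s * Real.cos (l * s)) volume (-1) 1 :=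
    IntervalIntegrable.mul_continuousOn hqmono'.intervalIntegrable (by fun_prop)
  have hsplit : (∫ s in (-1:ℝ)..1, ω s * Real.cos (l * s))
      = (∫ s in (-1:ℝ)..1, p s * Real.cos (l * s))
        - ∫ s in (-1:ℝ)..1, q s * Real.cos (l * s) := by
    rw [← intervalIntegral.integral_sub hpint hqint]
    apply intervalIntegral.integral_congr
    intro s _
    rw [hq]; dsimp only; ring
  have hbp := RL_monotoneOn p hpmono hlpos
  have hbq := RL_monotoneOn q hqmono hlpos
  rw [hpm1, hp1] at hbp
  rw [hqm1, hq1] at hbq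
  have hbp' : |∫ s in (-1:ℝ)..1, p s * Real.cos (l * s)| ≤ 2 * V / l := by
    calc |∫ s in (-1:ℝ)..1, p s * Real.cos (l * s)| ≤ (2*|(0:ℝ)| + 2*(V - 0)) / l := hbp
      _ = 2 * V / l := by simp
  have hbq' : |∫ s in (-1:ℝ)..1, q s * Real.cos (l * s)| ≤ (2*W + 2*(V + W)) / l := by
    refine hbq.trans ((div_le_div_iff_of_pos_right hlpos).mpr ?_)
    have h1 : |-ω (-1)| ≤ W := by rw [abs_neg, abs_of_nonneg (hω_nonneg _)]; exact hWle _
    have h2 : ω (-1) ≤ W := hWle (-1)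
    have h3 : 0 ≤ ω 1 := hω_nonneg 1
    linarith
  rw [hsplit]
  calc |(∫ s in (-1:ℝ)..1, p s * Real.cos (l * s))
        - ∫ s in (-1:ℝ)..1, q s * Real.cos (l * s)|
      ≤ |∫ s in (-1:ℝ)..1, p s * Real.cos (l * s)|
        + |∫ s in (-1:ℝ)..1, q s * Real.cos (l * s)| := abs_sub _ _
    _ ≤ 2 * V / l + (2*W + 2*(V + W)) / l := add_le_add hbp' hbq'
    _ = 4 * (V + W) / l := by ring

lemma per_i_bound (σ a b t um : ℝ) (hσ : 0 < σ) (hab : a < b) (ht : 0 < t)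
    (hupos : 0 < um) (VW : ℝ) (hVW : 0 ≤ VW)
    (μ : ℝ) (ψ1v ψta ψtb χ : ℝ)
    (hχ : χ = if μ ∈ Set.Ioo a b then (0:ℝ) else 1)
    (hψ1v : ψ1v = (1/π) * ∫ y in ((μ-b)*t)..((μ-a)*t), Real.sin y / y)
    (hψta : μ ≠ a → |ψta| ≤ 4*σ*VW/(t*|μ - a|))
    (hψtaself : μ = a → ψta = 1)
    (hψtb : μ ≠ b → |ψtb| ≤ 4*σ*VW/(t*|μ - b|))
    (hψtbself : μ = b → ψtb = 1)
    (hua : μ ≠ a → um ≤ |μ - a|) (hub : μ ≠ b → um ≤ |μ - b|) :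
    |1 - ψ1v - χ + (1/2)*(ψta + ψtb)| ≤ (4*σ*VW + 12)/(um*t) + 4/((b-a)*t) := by
  have hπ := Real.pi_pos
  have h1π : (1:ℝ)/π ≤ 1 := by
    rw [div_le_one hπ]
    linarith [Real.pi_gt_three]
  have hbt : 0 < (b-a)*t := mul_pos (by linarith) ht
  have hut : 0 < um*t := mul_pos hupos ht
  set T1 : ℝ := (4*σ*VW + 12)/(um*t) with hT1
  set T2 : ℝ := 4/((b-a)*t) with hT2
  have hT1nn : 0 ≤ T1 := by positivity
  have hT2nn : 0 ≤ T2 := by positivity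
  -- helper: (1/π) * X ≤ X for 0 ≤ X
  have hdivpi : ∀ X : ℝ, 0 ≤ X → (1/π) * X ≤ X := by
    intro X hX
    calc (1/π) * X ≤ 1 * X := mul_le_mul_of_nonneg_right h1π hX
      _ = X := one_mul X
  rcases eq_or_ne μ a with rfl | hna
  · -- μ = a
    have hnb : (μ:ℝ) ≠ b := hab.ne
    have hχ1 : χ = 1 := by
      rw [hχ, if_neg (by simp [Set.mem_Ioo])]
    have hta : ψta = 1 := hψtaself rfl
    have hzero : (μ - μ) * t = 0 := by ring
    rw [hzero] at hψ1v
    have hul : (μ-b)*t < 0 := mul_neg_of_neg_of_pos (by linarith) ht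
    have hkey := sinc_integral_half_left hul
    have h1 : |ψ1v - 1/2| ≤ 1/((b-μ)*t) := by
      rw [hψ1v, show (1/π) * (∫ y in ((μ-b)*t)..(0:ℝ), Real.sin y / y) - 1/2
        = (1/π) * ((∫ y in ((μ-b)*t)..(0:ℝ), Real.sin y / y) - π/2) from by field_simp]
      rw [abs_mul, abs_of_pos (by positivity : (0:ℝ) < 1/π)]
      calc (1/π) * |(∫ y in ((μ-b)*t)..(0:ℝ), Real.sin y / y) - π/2|
          ≤ |(∫ y in ((μ-b)*t)..(0:ℝ), Real.sin y / y) - π/2| := hdivpi _ (abs_nonneg _)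
        _ ≤ 1/(-((μ-b)*t)) := hkey
        _ = 1/((b-μ)*t) := by rw [show -((μ-b)*t) = (b-μ)*t from by ring]
    have humb : um ≤ b - μ := by
      have := hub hnb
      rwa [abs_of_neg (by linarith : μ - b < 0), neg_sub] at this
    have h2 : |ψtb| ≤ 4*σ*VW/(t*(b-μ)) := by
      have := hψtb hnb
      rwa [abs_of_neg (by linarith : μ - b < 0), neg_sub] at this
    have hd : t*um ≤ t*(b-μ) := mul_le_mul_of_nonneg_left humb ht.le
    have hσVW : 0 ≤ σ*VW := by positivity
    calc |1 - ψ1v - χ + (1/2)*(ψta + ψtb)|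
        = |(1/2 - ψ1v) + (1/2)*ψtb| := by rw [hχ1, hta]; congr 1; ring
      _ ≤ |1/2 - ψ1v| + |(1/2)*ψtb| := abs_add_le _ _
      _ ≤ 1/((b-μ)*t) + (1/2)*(4*σ*VW/(t*(b-μ))) := by
          apply add_le_add
          · rw [abs_sub_comm]; exact h1
          · rw [abs_mul, abs_of_pos (by norm_num : (0:ℝ) < 1/2)]
            exact mul_le_mul_of_nonneg_left h2 (by norm_num)
      _ ≤ T2 + T1 := by
          apply add_le_add
          · rw [hT2]; gcongr <;> norm_num
          · rw [show (1/2)*(4*σ*VW/(t*(b-μ))) = 2*σ*VW/(t*(b-μ)) from by ring, hT1]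
            calc 2*σ*VW/(t*(b-μ)) ≤ 2*σ*VW/(t*um) := by
                  apply div_le_div_of_nonneg_left (by positivity) (mul_pos ht hupos) hd
              _ ≤ (4*σ*VW + 12)/(um*t) := by
                  rw [show t*um = um*t from mul_comm t um]
                  gcongr
                  linarith
      _ = T1 + T2 := add_comm _ _
  rcases eq_or_ne μ b with rfl | hnb
  · -- μ = b
    have hχ1 : χ = 1 := by
      rw [hχ, if_neg (by simp [Set.mem_Ioo])]
    have htb : ψtb = 1 := hψtbself rfl
    have hzero : (μ - μ) * t = 0 := by ring
    rw [hzero] at hψ1v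
    have hvr : 0 < (μ-a)*t := hbt
    have hkey := sinc_integral_half_right hvr
    have h1 : |ψ1v - 1/2| ≤ 1/((μ-a)*t) := by
      rw [hψ1v, show (1/π) * (∫ y in (0:ℝ)..((μ-a)*t), Real.sin y / y) - 1/2
        = (1/π) * ((∫ y in (0:ℝ)..((μ-a)*t), Real.sin y / y) - π/2) from by field_simp]
      rw [abs_mul, abs_of_pos (by positivity : (0:ℝ) < 1/π)]
      calc (1/π) * |(∫ y in (0:ℝ)..((μ-a)*t), Real.sin y / y) - π/2|
          ≤ |(∫ y in (0:ℝ)..((μ-a)*t), Real.sin y / y) - π/2| := hdivpi _ (abs_nonneg _)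
        _ ≤ 1/((μ-a)*t) := hkey
    have humb : um ≤ μ - a := by
      have := hua hna
      rwa [abs_of_pos (by linarith : 0 < μ - a)] at this
    have h2 : |ψta| ≤ 4*σ*VW/(t*(μ-a)) := by
      have := hψta hna
      rwa [abs_of_pos (by linarith : 0 < μ - a)] at this
    have hd : t*um ≤ t*(μ-a) := mul_le_mul_of_nonneg_left humb ht.le
    have hσVW : 0 ≤ σ*VW := by positivity
    calc |1 - ψ1v - χ + (1/2)*(ψta + ψtb)|
        = |(1/2 - ψ1v) + (1/2)*ψta| := by rw [hχ1, htb]; congr 1; ring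
      _ ≤ |1/2 - ψ1v| + |(1/2)*ψta| := abs_add_le _ _
      _ ≤ 1/((μ-a)*t) + (1/2)*(4*σ*VW/(t*(μ-a))) := by
          apply add_le_add
          · rw [abs_sub_comm]; exact h1
          · rw [abs_mul, abs_of_pos (by norm_num : (0:ℝ) < 1/2)]
            exact mul_le_mul_of_nonneg_left h2 (by norm_num)
      _ ≤ T2 + T1 := by
          apply add_le_add
          · rw [hT2]; gcongr <;> norm_num
          · rw [show (1/2)*(4*σ*VW/(t*(μ-a))) = 2*σ*VW/(t*(μ-a)) from by ring, hT1]
            calc 2*σ*VW/(t*(μ-a)) ≤ 2*σ*VW/(t*um) := by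
                  apply div_le_div_of_nonneg_left (by positivity) (mul_pos ht hupos) hd
              _ ≤ (4*σ*VW + 12)/(um*t) := by
                  rw [show t*um = um*t from mul_comm t um]
                  gcongr
                  linarith
      _ = T1 + T2 := add_comm _ _
  · -- μ ∉ {a, b}
    have h0a : um ≤ |μ - a| := hua hna
    have h0b : um ≤ |μ - b| := hub hnb
    have hψta' : |ψta| ≤ 4*σ*VW/(t*um) := by
      refine (hψta hna).trans ?_
      gcongr
    have hψtb' : |ψtb| ≤ 4*σ*VW/(t*um) := by
      refine (hψtb hnb).trans ?_
      gcongr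
    have hψ1bnd : |1 - ψ1v - χ| ≤ 2/(um*t) := by
      by_cases hmem : μ ∈ Set.Ioo a b
      · -- interior
        rw [hχ, if_pos hmem]
        have hul : (μ-b)*t < 0 := mul_neg_of_neg_of_pos (by linarith [hmem.2]) ht
        have hvr : 0 < (μ-a)*t := mul_pos (by linarith [hmem.1]) ht
        have hkey := sinc_integral_interior hul hvr
        have hμa : um*t ≤ (μ-a)*t := by
          have : um ≤ μ - a := by
            have := hua hna; rwa [abs_of_pos (by linarith [hmem.1])] at this
          exact mul_le_mul_of_nonneg_right this ht.le
        have hμb : um*t ≤ (b-μ)*t := by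
          have : um ≤ b - μ := by
            have := hub hnb
            rwa [abs_of_neg (by linarith [hmem.2]), neg_sub] at this
          exact mul_le_mul_of_nonneg_right this ht.le
        have : |1 - ψ1v - 0| = (1/π) * |(∫ y in ((μ-b)*t)..((μ-a)*t), Real.sin y / y) - π| := by
          rw [hψ1v, sub_zero]
          rw [show 1 - (1/π) * (∫ y in ((μ-b)*t)..((μ-a)*t), Real.sin y / y)
            = -((1/π) * ((∫ y in ((μ-b)*t)..((μ-a)*t), Real.sin y / y) - π)) from by
              field_simp; ring]
          rw [abs_neg, abs_mul, abs_of_pos (by positivity : (0:ℝ) < 1/π)]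
        rw [this]
        calc (1/π) * |(∫ y in ((μ-b)*t)..((μ-a)*t), Real.sin y / y) - π|
            ≤ |(∫ y in ((μ-b)*t)..((μ-a)*t), Real.sin y / y) - π| :=
              hdivpi _ (abs_nonneg _)
          _ ≤ 1/((μ-a)*t) + 1/(-((μ-b)*t)) := hkey
          _ ≤ 1/(um*t) + 1/(um*t) := by
              apply add_le_add
              · gcongr
              · rw [show -((μ-b)*t) = (b-μ)*t from by ring]
                gcongr
          _ = 2/(um*t) := by ring
      · -- exterior
        rw [hχ, if_neg hmem]
        have habs : |ψ1v| ≤ 2/(um*t) := by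
          rw [hψ1v, abs_mul, abs_of_pos (by positivity : (0:ℝ) < 1/π)]
          have hcases : μ < a ∨ b < μ := by
            rcases lt_or_gt_of_ne hna with h | h
            · exact Or.inl h
            · rcases lt_or_gt_of_ne hnb with h2 | h2
              · exact absurd ⟨h, h2⟩ hmem
              · exact Or.inr h2
          have hkey : |∫ y in ((μ-b)*t)..((μ-a)*t), Real.sin y / y| ≤ 2/(um*t) := by
            rcases hcases with h | h
            · have hul : (μ-b)*t < 0 := mul_neg_of_neg_of_pos (by linarith) ht
              have hvr : (μ-a)*t < 0 := mul_neg_of_neg_of_pos (by linarith) ht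
              refine (sinc_integral_left hul hvr).trans ?_
              have h1 : um*t ≤ -((μ-b)*t) := by
                rw [show -((μ-b)*t) = (b-μ)*t from by ring]
                have : um ≤ b - μ := by
                  have := hub hnb; rwa [abs_of_neg (by linarith), neg_sub] at this
                exact mul_le_mul_of_nonneg_right this ht.le
              have h2 : um*t ≤ -((μ-a)*t) := by
                rw [show -((μ-a)*t) = (a-μ)*t from by ring]
                have : um ≤ a - μ := by
                  have := hua hna; rwa [abs_of_neg (by linarith), neg_sub] at this
                exact mul_le_mul_of_nonneg_right this ht.le
              calc 1/(-((μ-b)*t)) + 1/(-((μ-a)*t)) ≤ 1/(um*t) + 1/(um*t) := by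
                    apply add_le_add <;> gcongr
                _ = 2/(um*t) := by ring
            · have hul : 0 < (μ-b)*t := mul_pos (by linarith) ht
              have hvr : 0 < (μ-a)*t := mul_pos (by linarith) ht
              refine (sinc_integral_right hul hvr).trans ?_
              have h1 : um*t ≤ (μ-b)*t := by
                have : um ≤ μ - b := by
                  have := hub hnb; rwa [abs_of_pos (by linarith)] at this
                exact mul_le_mul_of_nonneg_right this ht.le
              have h2 : um*t ≤ (μ-a)*t := by
                have : um ≤ μ - a := by
                  have := hua hna; rwa [abs_of_pos (by linarith)] at this
                exact mul_le_mul_of_nonneg_right this ht.le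
              calc 1/((μ-b)*t) + 1/((μ-a)*t) ≤ 1/(um*t) + 1/(um*t) := by
                    apply add_le_add <;> gcongr
                _ = 2/(um*t) := by ring
          calc (1/π) * |∫ y in ((μ-b)*t)..((μ-a)*t), Real.sin y / y|
              ≤ |∫ y in ((μ-b)*t)..((μ-a)*t), Real.sin y / y| := hdivpi _ (abs_nonneg _)
            _ ≤ 2/(um*t) := hkey
        rw [show 1 - ψ1v - 1 = -ψ1v from by ring, abs_neg]
        exact habs
    -- combine
    calc |1 - ψ1v - χ + (1/2)*(ψta + ψtb)|
        ≤ |1 - ψ1v - χ| + |(1/2)*(ψta + ψtb)| := abs_add_le _ _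
      _ ≤ 2/(um*t) + (1/2)*(|ψta| + |ψtb|) := by
          apply add_le_add hψ1bnd
          rw [abs_mul, abs_of_pos (by norm_num : (0:ℝ) < 1/2)]
          exact mul_le_mul_of_nonneg_left (abs_add_le _ _) (by norm_num)
      _ ≤ 2/(um*t) + (1/2)*(4*σ*VW/(t*um) + 4*σ*VW/(t*um)) := by
          apply add_le_add le_rfl
          exact mul_le_mul_of_nonneg_left (add_le_add hψta' hψtb') (by norm_num)
      _ = (4*σ*VW + 2)/(um*t) := by
          rw [show t*um = um*t from mul_comm t um]
          field_simp
          ring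
      _ ≤ T1 + T2 := by
          have h1 : (4*σ*VW + 2)/(um*t) ≤ T1 := by
            rw [hT1]
            gcongr
            linarith
          linarith

/-- Speed of convergence of the average discriminant function `φ_m(t, μ)` to the alternative
proportion `π_{1,m}` for the bounded null `(a, b)`: for `t > 0` with `t(b−a) ≥ 2` and
`t u_m ≥ 2`,
`|π_{1,m}⁻¹ φ_m(t, μ) − 1| ≤ (4σ(‖ω‖_TV + ‖ω‖_∞) + 12)/(π_{1,m} u_m t) + 4/((b−a) t π_{1,m})`. -/
theorem oracle_speed_bounded_null
    (σ : ℝ) (hσ : 0 < σ) (a b : ℝ) (hab : a < b)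
    (ω : ℝ → ℝ) (hω_meas : Measurable ω) (hω_nonneg : ∀ s, 0 ≤ ω s)
    (hω_even : ∀ s, ω (-s) = ω s)
    (hω_bdd : ∃ C : ℝ, ∀ s, ω s ≤ C)
    (hω_supp : ∀ s : ℝ, s ∉ Set.Icc (-1:ℝ) 1 → ω s = 0)
    (hω_int : (∫ s in (-1:ℝ)..1, ω s) = 1)
    (hω_BV : BoundedVariationOn ω (Set.Icc (-1) 1))
    (m : ℕ) (hm : 0 < m) (μs : Fin m → ℝ)
    (ψ₁ : ℝ → ℝ → ℝ)
    (hψ₁ : ∀ t μ, ψ₁ t μ = (1 / π) * ∫ y in ((μ - b) * t)..((μ - a) * t), Real.sin y / y)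
    (ψt : ℝ → ℝ → ℝ → ℝ)
    (hψt : ∀ t μ μ', ψt t μ μ' = ∫ s in (-1:ℝ)..1, ω s * Real.cos (t * s * σ⁻¹ * (μ - μ')))
    (φm : ℝ → ℝ)
    (hφm : ∀ t, φm t = 1 - (1 / (m : ℝ)) * ∑ i, ψ₁ t (μs i) +
      (1 / (2 * (m : ℝ))) * ∑ i, (ψt t (μs i) a + ψt t (μs i) b))
    (π1 : ℝ)
    (hπ1 : π1 = (1 / (m : ℝ)) *
      ((Finset.univ.filter (fun i => μs i ∉ Set.Ioo a b)).card : ℝ))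
    (hπ1pos : 0 < π1)
    (hexa : ∃ j, μs j ≠ a) (hexb : ∃ j, μs j ≠ b)
    (um : ℝ)
    (hum : um = sInf {r : ℝ | ∃ j,
      (μs j ≠ a ∧ r = |μs j - a|) ∨ (μs j ≠ b ∧ r = |μs j - b|)})
    (t : ℝ) (ht : 0 < t) (htab : 2 ≤ t * (b - a)) (htu : 2 ≤ t * um) :
    |π1⁻¹ * φm t - 1| ≤
      (4 * σ * ((eVariationOn ω (Set.Icc (-1) 1)).toReal + ⨆ s : ℝ, |ω s|) + 12) /
          (π1 * um * t) +
        4 / ((b - a) * t * π1) := by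
  set V : ℝ := (eVariationOn ω (Set.Icc (-1) 1)).toReal with hV
  set W : ℝ := ⨆ s : ℝ, |ω s| with hW
  -- facts about um
  set Sset := {r : ℝ | ∃ j,
      (μs j ≠ a ∧ r = |μs j - a|) ∨ (μs j ≠ b ∧ r = |μs j - b|)} with hSset
  have hSsub : Sset ⊆ (Set.range fun j => |μs j - a|) ∪ (Set.range fun j => |μs j - b|) := by
    rintro r ⟨j, h | h⟩
    · exact Or.inl ⟨j, h.2.symm⟩
    · exact Or.inr ⟨j, h.2.symm⟩
  have hSfin : Sset.Finite := (((Set.finite_range _).union (Set.finite_range _)).subset hSsub)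
  obtain ⟨j0, hj0⟩ := hexa
  have hSne : Sset.Nonempty := ⟨|μs j0 - a|, ⟨j0, Or.inl ⟨hj0, rfl⟩⟩⟩
  have hum_mem : um ∈ Sset := by rw [hum]; exact hSne.csInf_mem hSfin
  have hupos : 0 < um := by
    obtain ⟨j, h | h⟩ := hum_mem
    · rw [h.2]; exact abs_pos.2 (sub_ne_zero.2 h.1)
    · rw [h.2]; exact abs_pos.2 (sub_ne_zero.2 h.1)
  have hua : ∀ j, μs j ≠ a → um ≤ |μs j - a| := fun j hj => by
    rw [hum]; exact csInf_le hSfin.bddBelow ⟨j, Or.inl ⟨hj, rfl⟩⟩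
  have hub : ∀ j, μs j ≠ b → um ≤ |μs j - b| := fun j hj => by
    rw [hum]; exact csInf_le hSfin.bddBelow ⟨j, Or.inr ⟨hj, rfl⟩⟩
  -- V, W nonneg
  have hVnn : 0 ≤ V := ENNReal.toReal_nonneg
  have hWnn : 0 ≤ W := by
    obtain ⟨C, hC⟩ := hω_bdd
    have hbdd : BddAbove (Set.range fun s : ℝ => |ω s|) := by
      refine ⟨C, ?_⟩
      rintro x ⟨s, rfl⟩
      dsimp only
      rw [abs_of_nonneg (hω_nonneg s)]
      exact hC s
    exact (abs_nonneg (ω 0)).trans (le_ciSup hbdd 0)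
  have hVW : (0:ℝ) ≤ V + W := by linarith
  -- ψt facts
  have hψt_self : ∀ μ', ψt t μ' μ' = 1 := by
    intro μ'
    rw [hψt]
    simp only [sub_self, mul_zero, Real.cos_zero, mul_one]
    exact hω_int
  have hψt_bound : ∀ μ μ', μ ≠ μ' → |ψt t μ μ'| ≤ 4*σ*(V+W)/(t*|μ - μ'|) := by
    intro μ μ' hne
    rw [hψt]
    have harg : ∀ s : ℝ, t * s * σ⁻¹ * (μ - μ') = (t * σ⁻¹ * (μ - μ')) * s := fun s => by ring
    simp_rw [harg]
    have hc : t * σ⁻¹ * (μ - μ') ≠ 0 :=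
      mul_ne_zero (mul_ne_zero ht.ne' (inv_ne_zero hσ.ne')) (sub_ne_zero.2 hne)
    refine (omega_cos_bound ω hω_nonneg hω_bdd hω_BV hc).trans (le_of_eq ?_)
    rw [← hV, ← hW, abs_mul, abs_mul, abs_of_pos ht, abs_of_pos (inv_pos.2 hσ)]
    have hd : |μ - μ'| ≠ 0 := abs_ne_zero.2 (sub_ne_zero.2 hne)
    field_simp
  -- per-i bounds
  set χ : Fin m → ℝ := fun i => if μs i ∈ Set.Ioo a b then (0:ℝ) else 1 with hχdef
  set Bd : ℝ := (4*σ*(V+W) + 12)/(um*t) + 4/((b-a)*t) with hBd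
  have hEbound : ∀ i, |1 - ψ₁ t (μs i) - χ i
      + (1/2)*(ψt t (μs i) a + ψt t (μs i) b)| ≤ Bd := by
    intro i
    refine per_i_bound σ a b t um hσ hab ht hupos (V+W) hVW (μs i)
      (ψ₁ t (μs i)) (ψt t (μs i) a) (ψt t (μs i) b) (χ i) rfl (hψ₁ t (μs i))
      (fun h => hψt_bound _ _ h) (fun h => by rw [h]; exact hψt_self a)
      (fun h => hψt_bound _ _ h) (fun h => by rw [h]; exact hψt_self b)
      (hua i) (hub i)
  -- sum manipulation
  have hm0 : (m:ℝ) ≠ 0 := Nat.cast_ne_zero.2 hm.ne'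
  have hπ1' : π1 = (1/(m:ℝ)) * ∑ i, χ i := by
    rw [hπ1]
    congr 1
    rw [Finset.card_filter]
    push_cast
    apply Finset.sum_congr rfl
    intro i _
    by_cases h : μs i ∈ Set.Ioo a b <;> rw [Set.mem_Ioo] at h <;> simp [hχdef, h]
  have expand : ∑ i, (1 - ψ₁ t (μs i) - χ i + (1/2)*(ψt t (μs i) a + ψt t (μs i) b))
      = (m:ℝ) - (∑ i, ψ₁ t (μs i)) - (∑ i, χ i)
        + (1/2) * ∑ i, (ψt t (μs i) a + ψt t (μs i) b) := by
    rw [Finset.sum_add_distrib, Finset.sum_sub_distrib, Finset.sum_sub_distrib,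
      ← Finset.mul_sum, Finset.sum_const, Finset.card_univ, Fintype.card_fin,
      nsmul_eq_mul, mul_one]
  have hsum : φm t - π1 = (1/(m:ℝ)) * ∑ i, (1 - ψ₁ t (μs i) - χ i
      + (1/2)*(ψt t (μs i) a + ψt t (μs i) b)) := by
    rw [hφm, hπ1', expand]
    field_simp
    ring
  have hBdnn : 0 ≤ Bd := by
    rw [hBd]
    have h1 : (0:ℝ) < um*t := mul_pos hupos ht
    have h2 : (0:ℝ) < (b-a)*t := mul_pos (by linarith) ht
    positivity
  have habs : |φm t - π1| ≤ Bd := by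
    rw [hsum, abs_mul, abs_of_pos (by positivity : (0:ℝ) < 1/(m:ℝ))]
    calc (1/(m:ℝ)) * |∑ i, (1 - ψ₁ t (μs i) - χ i
          + (1/2)*(ψt t (μs i) a + ψt t (μs i) b))|
        ≤ (1/(m:ℝ)) * ∑ i, |1 - ψ₁ t (μs i) - χ i
          + (1/2)*(ψt t (μs i) a + ψt t (μs i) b)| := by
          apply mul_le_mul_of_nonneg_left (Finset.abs_sum_le_sum_abs _ _) (by positivity)
      _ ≤ (1/(m:ℝ)) * ((m:ℝ) * Bd) := by
          apply mul_le_mul_of_nonneg_left ?_ (by positivity)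
          calc (∑ i, |1 - ψ₁ t (μs i) - χ i
              + (1/2)*(ψt t (μs i) a + ψt t (μs i) b)|)
              ≤ ∑ _i : Fin m, Bd := Finset.sum_le_sum (fun i _ => hEbound i)
            _ = (m:ℝ) * Bd := by
                rw [Finset.sum_const, Finset.card_univ, Fintype.card_fin, nsmul_eq_mul]
      _ = Bd := by field_simp
  have hfin : π1⁻¹ * φm t - 1 = π1⁻¹ * (φm t - π1) := by
    field_simp
  rw [hfin, abs_mul, abs_of_pos (inv_pos.2 hπ1pos)]
  calc π1⁻¹ * |φm t - π1| ≤ π1⁻¹ * Bd :=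
        mul_le_mul_of_nonneg_left habs (by positivity)
    _ = (4 * σ * (V + W) + 12) / (π1 * um * t) + 4 / ((b - a) * t * π1) := by
        rw [hBd]
        have h1 : um ≠ 0 := hupos.ne'
        have h2 : (b-a) ≠ 0 := sub_ne_zero.2 hab.ne'
        field_simp
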